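/- Let δ = ±1, let k₀, k₁, k₂ ∈ ℝ \ {0}, k₃ ∈ ℝ, let ν ∈ ℝ with ν ≠ 0, and let q : ℝ² → ℝ be a smooth function of (u_x, v_x) with k₂·q_{v_x} − k₁·q_{u_x} ≠ 0 everywhere. Let u, v : U → ℝ be smooth functions on an open set U ⊆ ℝ² satisfying on U: u_{xt} = δ·((q·q_{v_x} + k₀²k₁(k₁v_x + k₂u_x))/(k₂q_{v_x} − k₁q_{u_x}))·(k₁v + k₂u + k₃), v_{xt} = −δ·((q·q_{u_x} + k₀²k₂(k₁v_x + k₂u_x))/(k₂q_{v_x} − k₁q_{u_x}))·(k₁v + k₂u + k₃), where q and its partial derivatives are evaluated at (u_x, v_x). Define F₁₁ = (δ/ν)k₀(k₁v_x + k₂u_x), F₁₂ = 0, F₂₁ = (1/ν)q(u_x, v_x), F₂₂ = ν, F₃₁ = 0, F₃₂ = k₀(k₁v + k₂u + k₃). Then on U the structure equations hold: −∂_t F₁₁ + ∂_x F₁₂ = F₃₁F₂₂ − F₃₂F₂₁, −∂_t F₂₁ + ∂_x F₂₂ = F₁₁F₃₂ − F₁₂F₃₁, −∂_t F₃₁ +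 ∂_x F₃₂ = δ(F₁₁F₂₂ − F₁₂F₂₁); hence this family of systems, which generalizes the Konno–Oono coupled dispersionless system, describes pseudospherical surfaces (δ = 1), resp. spherical surfaces (δ = −1), with these associated functions. -/

import Mathlib

open Real

/-- Partial derivative in the `x` direction of a function on the `(x, t)` plane. -/
noncomputable def pdx (f : ℝ × ℝ → ℝ) (p : ℝ × ℝ) : ℝ := fderiv ℝ f p (1, 0)

/-- Partial derivative in the `t` direction of a function on the `(x, t)` plane. -/
noncomputable def pdt (f : ℝ × ℝ → ℝ) (p : ℝ × ℝ) : ℝ := fderiv ℝ f p (0, 1)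

/-- The structure equations of a surface of constant Gaussian curvature `-δ`. -/
def StructEqs (δ : ℝ) (U : Set (ℝ × ℝ)) (F11 F12 F21 F22 F31 F32 : ℝ × ℝ → ℝ) : Prop :=
  ∀ p ∈ U,
    -(pdt F11 p) + pdx F12 p = F31 p * F22 p - F32 p * F21 p ∧
    -(pdt F21 p) + pdx F22 p = F11 p * F32 p - F12 p * F31 p ∧
    -(pdt F31 p) + pdx F32 p = δ * (F11 p * F22 p - F12 p * F21 p)

/-- Partial derivative of a function of two real variables with respect to the first variable. -/
noncomputable def d1 (f : ℝ × ℝ → ℝ) (q : ℝ × ℝ) : ℝ := fderiv ℝ f q (1, 0)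

/-- Partial derivative of a function of two real variables with respect to the second variable. -/
noncomputable def d2 (f : ℝ × ℝ → ℝ) (q : ℝ × ℝ) : ℝ := fderiv ℝ f q (0, 1)

lemma clm_apply_pair (L : ℝ × ℝ →L[ℝ] ℝ) (x y : ℝ) :
    L (x, y) = x * L (1, 0) + y * L (0, 1) := by
  have h : (x, y) = x • ((1:ℝ), (0:ℝ)) + y • ((0:ℝ), (1:ℝ)) := by
    simp [Prod.ext_iff]
  rw [h, map_add, map_smul, map_smul]
  simp [smul_eq_mul]

lemma pd_comp (qf : ℝ × ℝ → ℝ) (hqf : Differentiable ℝ qf) {a b : ℝ × ℝ → ℝ} {p : ℝ × ℝ}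
    (ha : DifferentiableAt ℝ a p) (hb : DifferentiableAt ℝ b p) (dir : ℝ × ℝ) :
    fderiv ℝ (fun w => qf (a w, b w)) p dir
      = d1 qf (a p, b p) * fderiv ℝ a p dir + d2 qf (a p, b p) * fderiv ℝ b p dir := by
  have hab : HasFDerivAt (fun w => (a w, b w)) ((fderiv ℝ a p).prod (fderiv ℝ b p)) p :=
    ha.hasFDerivAt.prodMk hb.hasFDerivAt
  have h := ((hqf (a p, b p)).hasFDerivAt.comp p hab).fderiv
  have : fderiv ℝ (fun w => qf (a w, b w)) p
      = (fderiv ℝ qf (a p, b p)).comp ((fderiv ℝ a p).prod (fderiv ℝ b p)) := h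
  rw [this]
  simp only [ContinuousLinearMap.comp_apply, ContinuousLinearMap.prod_apply]
  rw [clm_apply_pair]
  simp only [d1, d2]
  ring

/-- The family of systems (41), generalizing the Konno–Oono coupled dispersionless system,
describes pseudospherical surfaces (`δ = 1`), resp. spherical surfaces (`δ = −1`). -/
theorem corollary_classe5parametrosKODIS_describes_pss_ss (δ k0 k1 k2 k3 ν : ℝ)
    (hδ : δ = 1 ∨ δ = -1) (hk0 : k0 ≠ 0) (hk1 : k1 ≠ 0) (hk2 : k2 ≠ 0) (hν : ν ≠ 0)
    (qf : ℝ × ℝ → ℝ) (hqf : ContDiff ℝ (⊤ : ℕ∞) qf)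
    (hW : ∀ w : ℝ × ℝ, k2 * d2 qf w - k1 * d1 qf w ≠ 0)
    (U : Set (ℝ × ℝ)) (hU : IsOpen U)
    (u v : ℝ × ℝ → ℝ)
    (hu : ContDiffOn ℝ (⊤ : ℕ∞) u U) (hv : ContDiffOn ℝ (⊤ : ℕ∞) v U)
    (heq1 : ∀ p ∈ U, pdt (pdx u) p =
      δ * ((qf (pdx u p, pdx v p) * d2 qf (pdx u p, pdx v p)
              + k0 ^ 2 * k1 * (k1 * pdx v p + k2 * pdx u p)) /
            (k2 * d2 qf (pdx u p, pdx v p) - k1 * d1 qf (pdx u p, pdx v p))) *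
        (k1 * v p + k2 * u p + k3))
    (heq2 : ∀ p ∈ U, pdt (pdx v) p =
      -δ * ((qf (pdx u p, pdx v p) * d1 qf (pdx u p, pdx v p)
              + k0 ^ 2 * k2 * (k1 * pdx v p + k2 * pdx u p)) /
            (k2 * d2 qf (pdx u p, pdx v p) - k1 * d1 qf (pdx u p, pdx v p))) *
        (k1 * v p + k2 * u p + k3)) :
    StructEqs δ U
      (fun w => δ / ν * k0 * (k1 * pdx v w + k2 * pdx u w))
      (fun _ => 0)
      (fun w => 1 / ν * qf (pdx u w, pdx v w))
      (fun _ => ν)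
      (fun _ => 0)
      (fun w => k0 * (k1 * v w + k2 * u w + k3)) := by
  intro p hp
  have hpU : U ∈ nhds p := hU.mem_nhds hp
  -- smoothness of pdx u, pdx v on U
  have hux : ContDiffOn ℝ (⊤ : ℕ∞) (pdx u) U := by
    have h1 : ContDiffOn ℝ (⊤ : ℕ∞) (fderiv ℝ u) U :=
      hu.fderiv_of_isOpen hU (by exact_mod_cast le_top)
    exact h1.clm_apply contDiffOn_const
  have hvx : ContDiffOn ℝ (⊤ : ℕ∞) (pdx v) U := by
    have h1 : ContDiffOn ℝ (⊤ : ℕ∞) (fderiv ℝ v) U :=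
      hv.fderiv_of_isOpen hU (by exact_mod_cast le_top)
    exact h1.clm_apply contDiffOn_const
  have huxd : DifferentiableAt ℝ (pdx u) p :=
    (hux.contDiffAt hpU).differentiableAt (by simp)
  have hvxd : DifferentiableAt ℝ (pdx v) p :=
    (hvx.contDiffAt hpU).differentiableAt (by simp)
  have hud : DifferentiableAt ℝ u p := (hu.contDiffAt hpU).differentiableAt (by simp)
  have hvd : DifferentiableAt ℝ v p := (hv.contDiffAt hpU).differentiableAt (by simp)
  -- derivative of F11 in t
  have e11 : pdt (fun w => δ / ν * k0 * (k1 * pdx v w + k2 * pdx u w)) p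
      = δ / ν * k0 * (k1 * pdt (pdx v) p + k2 * pdt (pdx u) p) := by
    have h : HasFDerivAt (fun w => δ / ν * k0 * (k1 * pdx v w + k2 * pdx u w))
        ((δ / ν * k0) • (k1 • fderiv ℝ (pdx v) p + k2 • fderiv ℝ (pdx u) p)) p :=
      ((hvxd.hasFDerivAt.const_mul k1).add (huxd.hasFDerivAt.const_mul k2)).const_mul
        (δ / ν * k0)
    unfold pdt
    rw [h.fderiv]
    simp only [ContinuousLinearMap.coe_smul', Pi.smul_apply, ContinuousLinearMap.add_apply,
      smul_eq_mul]
  -- derivative of F21 in t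
  have e21 : pdt (fun w => 1 / ν * qf (pdx u w, pdx v w)) p
      = 1 / ν * (d1 qf (pdx u p, pdx v p) * pdt (pdx u) p
          + d2 qf (pdx u p, pdx v p) * pdt (pdx v) p) := by
    have hq : DifferentiableAt ℝ (fun w => qf (pdx u w, pdx v w)) p := by
      exact ((hqf.differentiable (by simp)) _).comp p
        (huxd.prodMk hvxd)
    have h : HasFDerivAt (fun w => 1 / ν * qf (pdx u w, pdx v w))
        ((1 / ν) • fderiv ℝ (fun w => qf (pdx u w, pdx v w)) p) p :=
      hq.hasFDerivAt.const_mul (1 / ν)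
    unfold pdt
    rw [h.fderiv]
    simp only [ContinuousLinearMap.coe_smul', Pi.smul_apply, smul_eq_mul]
    rw [pd_comp qf (hqf.differentiable (by simp)) huxd hvxd]
  -- derivative of F32 in x
  have e32 : pdx (fun w => k0 * (k1 * v w + k2 * u w + k3)) p
      = k0 * (k1 * pdx v p + k2 * pdx u p) := by
    have h : HasFDerivAt (fun w => k0 * (k1 * v w + k2 * u w + k3))
        (k0 • (k1 • fderiv ℝ v p + k2 • fderiv ℝ u p)) p := by
      have := (((hvd.hasFDerivAt.const_mul k1).add (hud.hasFDerivAt.const_mul k2)).add_const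
        k3).const_mul k0
      simpa using this
    unfold pdx
    rw [h.fderiv]
    simp only [ContinuousLinearMap.coe_smul', Pi.smul_apply, ContinuousLinearMap.add_apply,
      smul_eq_mul]
  have ec0t : pdt (fun _ : ℝ × ℝ => (0:ℝ)) p = 0 := by simp [pdt]
  have ec0x : pdx (fun _ : ℝ × ℝ => (0:ℝ)) p = 0 := by simp [pdx]
  have ecνx : pdx (fun _ : ℝ × ℝ => ν) p = 0 := by simp [pdx]
  have h1 := heq1 p hp
  have h2 := heq2 p hp
  have hW' := hW (pdx u p, pdx v p)
  refine ⟨?_, ?_, ?_⟩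
  · rw [e11, ec0x, h1, h2]
    rcases hδ with rfl | rfl <;> field_simp <;> ring
  · rw [e21, ecνx, h1, h2]
    generalize hD : k2 * d2 qf (pdx u p, pdx v p) - k1 * d1 qf (pdx u p, pdx v p) = D at hW' ⊢
    rcases hδ with rfl | rfl <;> field_simp <;> rw [← hD] <;> ring
  · rw [ec0t, e32]
    rcases hδ with rfl | rfl <;> field_simp <;> ring
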